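/- (Tightness of the mixed-monotone decomposition.) Let n ∈ ℕ, let x̲ ≤ x̄ in Fin n → ℝ, let h : (Fin n → ℝ) → ℝ be differentiable on an open set containing Set.Icc x̲ x̄, and let S ⊆ Fin n be such that for all x ∈ Set.Icc x̲ x̄: ∂h/∂x_j (x) ≥ 0 for every j ∈ S and ∂h/∂x_j (x) ≤ 0 for every j ∉ S. Define v_min, v_max ∈ Fin n → ℝ by v_min j = x̲ j if j ∈ S and v_min j = x̄ j otherwise, and v_max j = x̄ j if j ∈ S and v_max j = x̲ j otherwise. Then for every x ∈ Set.Icc x̲ x̄, h v_min ≤ h x ≤ h v_max; that is, h attains its minimum over the box at v_min and its maximum at v_max. -/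

import Mathlib

lemma fderiv_apply_sum (n : ℕ) (L : (Fin n → ℝ) →L[ℝ] ℝ) (v : Fin n → ℝ) :
    L v = ∑ j, v j * L (Pi.single j 1) := by
  have hv : v = ∑ j, (v j) • (Pi.single j 1 : Fin n → ℝ) := by
    funext i
    simp [Finset.sum_apply, Pi.single_apply]
  conv_lhs => rw [hv]
  simp [map_sum, smul_eq_mul]

lemma seg_le (n : ℕ) (h : (Fin n → ℝ) → ℝ) (U : Set (Fin n → ℝ)) (hU : IsOpen U)
    (hh : DifferentiableOn ℝ h U) (a b : Fin n → ℝ)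
    (hmem : ∀ t ∈ Set.Icc (0:ℝ) 1, a + t • (b - a) ∈ U)
    (hder : ∀ t ∈ Set.Icc (0:ℝ) 1, 0 ≤ fderiv ℝ h (a + t • (b - a)) (b - a)) :
    h a ≤ h b := by
  set γ : ℝ → (Fin n → ℝ) := fun t => a + t • (b - a) with hγ
  have hline : ∀ t : ℝ, HasDerivAt γ (b - a) t := by
    intro t
    have := ((hasDerivAt_id t).smul_const (b - a)).const_add a
    simpa [hγ] using this
  have hg : ∀ t ∈ Set.Icc (0:ℝ) 1,
      HasDerivAt (h ∘ γ) (fderiv ℝ h (γ t) (b - a)) t := by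
    intro t ht
    have hdiff : DifferentiableAt ℝ h (γ t) :=
      hh.differentiableAt (hU.mem_nhds (hmem t ht))
    exact hdiff.hasFDerivAt.comp_hasDerivAt t (hline t)
  have hcont : ContinuousOn (h ∘ γ) (Set.Icc 0 1) := fun t ht =>
    ((hg t ht).continuousAt).continuousWithinAt
  have hmono : MonotoneOn (h ∘ γ) (Set.Icc 0 1) := by
    apply monotoneOn_of_deriv_nonneg (convex_Icc 0 1) hcont
    · intro t ht
      rw [interior_Icc] at ht
      exact (hg t (Set.mem_Icc_of_Ioo ht)).differentiableAt.differentiableWithinAt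
    · intro t ht
      rw [interior_Icc] at ht
      rw [(hg t (Set.mem_Icc_of_Ioo ht)).deriv]
      exact hder t (Set.mem_Icc_of_Ioo ht)
  have := hmono (Set.left_mem_Icc.2 zero_le_one) (Set.right_mem_Icc.2 zero_le_one) zero_le_one
  simpa [γ] using this

theorem stmt_3 (n : ℕ) (xl xu : Fin n → ℝ) (hle : xl ≤ xu)
    (h : (Fin n → ℝ) → ℝ) (U : Set (Fin n → ℝ)) (hU : IsOpen U)
    (hXU : Set.Icc xl xu ⊆ U) (hh : DifferentiableOn ℝ h U)
    (S : Set (Fin n))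
    (hS : ∀ x ∈ Set.Icc xl xu, ∀ j,
      (j ∈ S → 0 ≤ fderiv ℝ h x (Pi.single j 1)) ∧
      (j ∉ S → fderiv ℝ h x (Pi.single j 1) ≤ 0))
    (vmin vmax : Fin n → ℝ)
    (hvmin : ∀ j, (j ∈ S → vmin j = xl j) ∧ (j ∉ S → vmin j = xu j))
    (hvmax : ∀ j, (j ∈ S → vmax j = xu j) ∧ (j ∉ S → vmax j = xl j)) :
    ∀ x ∈ Set.Icc xl xu, h vmin ≤ h x ∧ h x ≤ h vmax := by
  intro x hx
  have hvminX : vmin ∈ Set.Icc xl xu := by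
    constructor <;> intro j <;>
    · rcases hvmin j with ⟨h1, h2⟩
      by_cases hj : j ∈ S
      · simp [h1 hj, hle j, le_refl]
      · simp [h2 hj, hle j, le_refl]
  have hvmaxX : vmax ∈ Set.Icc xl xu := by
    constructor <;> intro j <;>
    · rcases hvmax j with ⟨h1, h2⟩
      by_cases hj : j ∈ S
      · simp [h1 hj, hle j, le_refl]
      · simp [h2 hj, hle j, le_refl]
  have hconv : Convex ℝ (Set.Icc xl xu) := convex_Icc _ _
  have key : ∀ a b : Fin n → ℝ, a ∈ Set.Icc xl xu → b ∈ Set.Icc xl xu →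
      (∀ j, (j ∈ S → a j ≤ b j) ∧ (j ∉ S → b j ≤ a j)) → h a ≤ h b := by
    intro a b ha hb hab
    apply seg_le n h U hU hh a b
    · intro t ht
      exact hXU (hconv.add_smul_sub_mem ha hb ht)
    · intro t ht
      have hyX : a + t • (b - a) ∈ Set.Icc xl xu := hconv.add_smul_sub_mem ha hb ht
      rw [fderiv_apply_sum n (fderiv ℝ h (a + t • (b - a))) (b - a)]
      apply Finset.sum_nonneg
      intro j _
      rcases hS _ hyX j with ⟨hpos, hneg⟩
      by_cases hj : j ∈ S
      · exact mul_nonneg (by simpa using sub_nonneg.2 ((hab j).1 hj)) (hpos hj)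
      · exact mul_nonneg_of_nonpos_of_nonpos (by simpa using sub_nonpos.2 ((hab j).2 hj)) (hneg hj)
  constructor
  · apply key vmin x hvminX hx
    intro j
    rcases hvmin j with ⟨h1, h2⟩
    exact ⟨fun hj => by rw [h1 hj]; exact hx.1 j, fun hj => by rw [h2 hj]; exact hx.2 j⟩
  · apply key x vmax hx hvmaxX
    intro j
    rcases hvmax j with ⟨h1, h2⟩
    exact ⟨fun hj => by rw [h1 hj]; exact hx.2 j, fun hj => by rw [h2 hj]; exact hx.1 j⟩
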